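/- Let n ≥ 0 and let X be a metric space of asymptotic dimension at most n. Then for every ε > 0 there exists δ > 0 such that: for every set S, every simplicial complex K ⊆ Δ(S), every subset A ⊆ X, and every δ-partition of unity f: X → K with f(A) ⊆ K^(n), there exists a map h: X → K^(n) which agrees with f on A, satisfies supp(h(x)) ⊆ supp(f(x)) for all x ∈ X, and is an ε-partition of unity. -/

import Mathlib

open Function Metric ENNReal

noncomputable section

/-- `ℓ¹(S)`: real-valued functions on `S` with finite `ℓ¹`-norm, with the `ℓ¹` metric. -/
abbrev ellOne (S : Type u) : Type u := lp (fun _ : S => ℝ) 1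

/-- The full simplex `Δ(S) ⊆ ℓ¹(S)`. -/
def fullSimplex (S : Type u) : Set (ellOne S) :=
  {p | (∀ s, 0 ≤ p s) ∧ (support (p : S → ℝ)).Finite ∧ ∑' s, p s = 1}

/-- The `n`-skeleton `Δ(S)^(n)` of the full simplex. -/
def skeleton (S : Type u) (n : ℕ) : Set (ellOne S) :=
  {p ∈ fullSimplex S | (support (p : S → ℝ)).encard ≤ n + 1}

/-- A simplicial complex on `S`: a subset of `Δ(S)` closed under passing to
points whose support is contained in the support of a member. -/
def IsSimplicialComplex {S : Type u} (K : Set (ellOne S)) : Prop :=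
  K ⊆ fullSimplex S ∧
    ∀ p ∈ K, ∀ q ∈ fullSimplex S,
      support (q : S → ℝ) ⊆ support (p : S → ℝ) → q ∈ K

/-- The star of a vertex `v` in `K`. -/
def star {S : Type u} (K : Set (ellOne S)) (v : S) : Set (ellOne S) :=
  {p ∈ K | 0 < p v}

/-- `f` is `(λ, C)`-Lipschitz. -/
def IsLipschitzLC {X Y : Type*} [MetricSpace X] [MetricSpace Y]
    (l C : ℝ) (f : X → Y) : Prop :=
  ∀ x y, dist (f x) (f y) ≤ l * dist x y + C

/-- A family of sets is uniformly bounded. -/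
def UniformlyBounded {X : Type*} [MetricSpace X] {ι : Type*} (U : ι → Set X) : Prop :=
  ∃ M : ℝ, ∀ i, ∀ x ∈ U i, ∀ y ∈ U i, dist x y ≤ M

/-- `U` is a cover of the whole space. -/
def IsCover {X : Type*} {ι : Type*} (U : ι → Set X) : Prop := ∀ x, ∃ i, x ∈ U i

/-- The Lebesgue number `inf_x sup_i dist(x, X∖Uᵢ)` of a family, as a value in `ℝ≥0∞`. -/
def lebesgue {X : Type*} [MetricSpace X] {ι : Type*} (U : ι → Set X) : ℝ≥0∞ :=
  ⨅ x : X, ⨆ i, EMetric.infEdist x (U i)ᶜ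

/-- The multiplicity of `U` is at most `m`. -/
def MultiplicityLE {X : Type*} [MetricSpace X] {ι : Type*} (U : ι → Set X) (m : ℕ) : Prop :=
  ∀ x : X, {i | 0 < Metric.infDist x ((U i)ᶜ)}.encard ≤ m

/-- `f : X → K` is a `δ`-partition of unity. -/
def IsDeltaPartitionOfUnity {X : Type*} [MetricSpace X] {S : Type u}
    (δ : ℝ) (K : Set (ellOne S)) (f : X → ellOne S) : Prop :=
  (∀ x, f x ∈ K) ∧ IsLipschitzLC δ δ f ∧
    UniformlyBounded (fun v : S => f ⁻¹' star K v) ∧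
    ENNReal.ofReal (1 / δ) ≤ lebesgue (fun v : S => f ⁻¹' star K v)

/-- `X` is large scale paracompact. -/
def LSParacompact (X : Type u) [MetricSpace X] : Prop :=
  ∀ (ι : Type u) (U : ι → Set X), IsCover U → UniformlyBounded U →
    ∀ l C : ℝ, 0 < l → 0 < C →
      ∃ (S : Type u) (K : Set (ellOne S)) (f : X → ellOne S),
        IsSimplicialComplex K ∧ (∀ x, f x ∈ K) ∧ IsLipschitzLC l C f ∧
        UniformlyBounded (fun v : S => f ⁻¹' star K v) ∧
        ∀ i, ∃ v : S, U i ⊆ f ⁻¹' star K v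

/-- `X` has asymptotic dimension at most `n`. -/
def AsdimLE (X : Type u) [MetricSpace X] (n : ℕ) : Prop :=
  ∀ R : ℝ, 0 < R → ∃ (ι : Type u) (U : ι → Set X),
    IsCover U ∧ UniformlyBounded U ∧ MultiplicityLE U (n + 1) ∧
    ENNReal.ofReal R ≤ lebesgue U

/-- `X` has Property A. -/
def PropertyA (X : Type u) [MetricSpace X] : Prop :=
  ∀ R ε : ℝ, 0 < R → 0 < ε →
    ∃ (M : ℝ) (S : Type u) (φ : S → X → ℝ), 0 < M ∧
      (∀ s x, 0 ≤ φ s x ∧ φ s x ≤ 1) ∧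
      (∀ x, (support fun s => φ s x).Finite) ∧
      (∀ x, ∑' s, φ s x = 1) ∧
      (∀ x y, dist x y ≤ R → ∑' s, |φ s x - φ s y| < ε) ∧
      (∀ s, ∀ x ∈ support (φ s), ∀ y ∈ support (φ s), dist x y ≤ M)

/-- `f` has `(R, ε)` variation. -/
def HasVariation {X Y : Type*} [MetricSpace X] [MetricSpace Y] (R ε : ℝ) (f : X → Y) : Prop :=
  ∀ x y, dist x y ≤ R → dist (f x) (f y) < ε

/-- `g` is a coarse embedding. -/
def CoarseEmbedding {X Y : Type*} [MetricSpace X] [MetricSpace Y] (g : X → Y) : Prop :=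
  ∃ ρminus ρplus : ℝ → ℝ, Monotone ρminus ∧ Monotone ρplus ∧
    Filter.Tendsto ρminus Filter.atTop Filter.atTop ∧
    ∀ x y, ρminus (dist x y) ≤ dist (g x) (g y) ∧ dist (g x) (g y) ≤ ρplus (dist x y)

/-- `X` has bounded geometry: balls of any fixed radius have uniformly bounded cardinality. -/
def BoundedGeometry (X : Type*) [MetricSpace X] : Prop :=
  ∀ r : ℝ, 0 < r → ∃ N : ℕ, ∀ x : X, (Metric.ball x r).encard ≤ N

/-! ### Auxiliary lemmas -/

theorem memEll {S : Type u} {c : S → ℝ} (hc : (support c).Finite) : Memℓp c (1:ℝ≥0∞) := by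
  apply memℓp_gen
  simp only [ENNReal.toReal_one, Real.rpow_one]
  apply summable_of_ne_finset_zero (s := hc.toFinset)
  intro b hb
  simp only [Set.Finite.mem_toFinset, mem_support, not_not] at hb
  simp [hb]

/-- Build an element of `ℓ¹(S)` from a finitely supported function. -/
def mkEll {S : Type u} (c : S → ℝ) (hc : (support c).Finite) : ellOne S := ⟨c, memEll hc⟩

@[simp] theorem mkEll_apply {S : Type u} (c : S → ℝ) (hc) (s : S) :
    (mkEll c hc : S → ℝ) s = c s := rfl

theorem norm_eq_tsum_abs {S : Type u} (p : ellOne S) : ‖p‖ = ∑' s, |(p : S → ℝ) s| := by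
  have := lp.norm_eq_tsum_rpow (p := (1:ℝ≥0∞)) (by norm_num) p
  simpa using this

theorem summable_abs_ell {S : Type u} (p : ellOne S) : Summable (fun s => |(p : S → ℝ) s|) := by
  have := lp.memℓp p
  rw [memℓp_gen_iff (by norm_num)] at this
  simpa using this

theorem norm_eq_finsum {S : Type u} (p : ellOne S) (F : Finset S)
    (h : ∀ s ∉ F, (p : S → ℝ) s = 0) : ‖p‖ = ∑ s ∈ F, |(p : S → ℝ) s| := by
  rw [norm_eq_tsum_abs, tsum_eq_sum]
  intro b hb; simp [h b hb]

theorem finsum_abs_le_norm {S : Type u} (p : ellOne S) (F : Finset S) :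
    ∑ s ∈ F, |(p : S → ℝ) s| ≤ ‖p‖ := by
  rw [norm_eq_tsum_abs]
  exact Summable.sum_le_tsum F (fun _ _ => abs_nonneg _) (summable_abs_ell p)

theorem tsum_eq_finsum_ell {S : Type u} (p : ellOne S) (F : Finset S)
    (h : ∀ s ∉ F, (p : S → ℝ) s = 0) : ∑' s, (p : S → ℝ) s = ∑ s ∈ F, (p : S → ℝ) s :=
  tsum_eq_sum h

theorem norm_le_of_abs_le {S : Type u} (p q : ellOne S)
    (h : ∀ s, |(p : S → ℝ) s| ≤ |(q : S → ℝ) s|) : ‖p‖ ≤ ‖q‖ := by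
  rw [norm_eq_tsum_abs, norm_eq_tsum_abs]
  exact Summable.tsum_le_tsum h (summable_abs_ell p) (summable_abs_ell q)

theorem simplex_norm_one {S : Type u} {p : ellOne S} (hp : p ∈ fullSimplex S) : ‖p‖ = 1 := by
  rw [norm_eq_tsum_abs]
  rw [show (fun s => |(p : S → ℝ) s|) = fun s => (p : S → ℝ) s from
    funext fun s => abs_of_nonneg (hp.1 s)]
  exact hp.2.2

theorem lip_toReal_min {X : Type*} [MetricSpace X] (C : Set X) (c : ℝ≥0∞) (hc : c ≠ ⊤) (x y : X) :
    |(min (EMetric.infEdist x C) c).toReal - (min (EMetric.infEdist y C) c).toReal| ≤ dist x y := by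
  have key : ∀ a b : X, min (EMetric.infEdist a C) c ≤ min (EMetric.infEdist b C) c + edist a b := by
    intro a b
    have h1 : EMetric.infEdist a C ≤ EMetric.infEdist b C + edist a b :=
      EMetric.infEdist_le_infEdist_add_edist
    rcases le_total (EMetric.infEdist b C) c with hbc | hbc
    · calc min (EMetric.infEdist a C) c ≤ EMetric.infEdist a C := min_le_left _ _
        _ ≤ EMetric.infEdist b C + edist a b := h1
        _ = min (EMetric.infEdist b C) c + edist a b := by rw [min_eq_left hbc]
    · calc min (EMetric.infEdist a C) c ≤ c := min_le_right _ _
        _ = min (EMetric.infEdist b C) c := (min_eq_right hbc).symm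
        _ ≤ _ := le_self_add
  have hfin : ∀ a : X, min (EMetric.infEdist a C) c ≠ ⊤ := fun a =>
    ne_top_of_le_ne_top hc (min_le_right _ _)
  have hd : ∀ a b : X, (min (EMetric.infEdist a C) c).toReal
      ≤ (min (EMetric.infEdist b C) c).toReal + dist a b := by
    intro a b
    have := ENNReal.toReal_mono (by simp [hfin b, edist_ne_top]) (key a b)
    rwa [ENNReal.toReal_add (hfin b) (edist_ne_top a b), ← dist_edist] at this
  rw [abs_le]
  constructor
  · have := hd y x; rw [dist_comm] at this; linarith
  · have := hd x y; linarith

set_option maxHeartbeats 16000000 in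
theorem coreA {X : Type u} [MetricSpace X] [Nonempty X] (n : ℕ) (ε T R δ B : ℝ)
    (hε : 0 < ε) (hT : T = 8/ε)
    (hR : R = 2*(T+2) + 32*(n+1)/ε + 2/ε + 8)
    (hδpos : 0 < δ) (hδa : δ ≤ ε/(16*T+36)) (hδb : δ ≤ 1/(2*(T+3))) (hδc : δ ≤ 1/(B+2))
    (hB : 0 ≤ B)
    {ι : Type u} (U : ι → Set X)
    (hUB : ∀ i, ∀ x ∈ U i, ∀ y ∈ U i, dist x y ≤ B)
    (hmult : ∀ x : X,
      {i | 0 < (min (EMetric.infEdist x (U i)ᶜ) (ENNReal.ofReal R)).toReal}.encard ≤ (n:ℕ∞)+1)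
    (hdeep : ∀ x : X, ∃ i, R/2 ≤ (min (EMetric.infEdist x (U i)ᶜ) (ENNReal.ofReal R)).toReal)
    (S : Type u) (K : Set (ellOne S)) (A : Set X) (f : X → ellOne S)
    (hK : IsSimplicialComplex K) (hf : IsDeltaPartitionOfUnity δ K f)
    (hfA : ∀ a ∈ A, f a ∈ K ∩ skeleton S n) :
    ∃ h : X → ellOne S,
      (∀ x, h x ∈ K ∩ skeleton S n) ∧
      (∀ a ∈ A, h a = f a) ∧
      (∀ x, support ((h x : S → ℝ)) ⊆ support ((f x : S → ℝ))) ∧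
      IsDeltaPartitionOfUnity ε K h := by
  classical
  have hfact : Fact ((1:ℝ≥0∞) ≤ 1) := ⟨le_rfl⟩
  -- numerics
  have hTpos : 0 < T := by rw [hT]; positivity
  have hn0 : (0:ℝ) ≤ 32*(n+1)/ε := by positivity
  have hRpos : 0 < R := by rw [hR]; positivity
  obtain ⟨R₁, hR₁def⟩ : ∃ z : ℝ, z = R/2 - (T+2) := ⟨_, rfl⟩
  have hR₁ν : R₁ = 16*(n+1)/ε + 1/ε + 4 := by rw [hR₁def, hR]; ring
  have h1ε : 0 < 1/ε := by positivity
  have hnn16 : (0:ℝ) ≤ 16*(n+1)/ε := by positivity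
  have hR₁a : 16*(n+1)/ε ≤ R₁ := by rw [hR₁ν]; linarith
  have hR₁b : 1/ε + 4 ≤ R₁ := by rw [hR₁ν]; linarith
  have hR₁pos : 0 < R₁ := by rw [hR₁ν]; linarith
  -- basic facts about f
  have hfK : ∀ x, f x ∈ K := hf.1
  have hfsimp : ∀ x, f x ∈ fullSimplex S := fun x => hK.1 (hfK x)
  have hffin : ∀ x, (support ((f x : S → ℝ))).Finite := fun x => (hfsimp x).2.1
  have hfnn : ∀ x s, 0 ≤ (f x : S → ℝ) s := fun x => (hfsimp x).1
  -- the support finsets of f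
  obtain ⟨σ, hσdef⟩ : ∃ z : X → Finset S, z = fun x => (hffin x).toFinset := ⟨_, rfl⟩
  have hσmem : ∀ x w, w ∈ σ x ↔ (f x : S → ℝ) w ≠ 0 := by
    intro x w; simp only [hσdef]; simp [Set.Finite.mem_toFinset]
  -- choice of vertices
  have hexs : ∃ s₀ : S, (f (Classical.arbitrary X) : S → ℝ) s₀ ≠ 0 := by
    by_contra hcon
    push_neg at hcon
    have h1 := (hfsimp (Classical.arbitrary X)).2.2
    rw [tsum_eq_finsum_ell _ ∅ (fun s _ => hcon s)] at h1
    simp at h1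
  obtain ⟨s₀, -⟩ := hexs
  have hvex : ∀ i, ∃ w : S, U i ⊆ f ⁻¹' star K w := by
    intro i
    rcases (U i).eq_empty_or_nonempty with hUi | ⟨xi, hxi⟩
    · exact ⟨s₀, by rw [hUi]; exact Set.empty_subset _⟩
    · have hleb := hf.2.2.2
      have h1δ : B + 2 ≤ 1/δ := by
        rw [le_div_iff₀ hδpos]
        calc (B+2)*δ ≤ (B+2) * (1/(B+2)) := by
              apply mul_le_mul_of_nonneg_left hδc (by linarith)
          _ = 1 := by field_simp
      have h2 : ENNReal.ofReal (B+2) ≤ ⨆ w, EMetric.infEdist xi (f ⁻¹' star K w)ᶜ := by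
        refine le_trans (ENNReal.ofReal_le_ofReal h1δ) (le_trans hleb ?_)
        exact iInf_le _ xi
      have h3 : ENNReal.ofReal (B+1) < ⨆ w, EMetric.infEdist xi (f ⁻¹' star K w)ᶜ :=
        lt_of_lt_of_le (by rw [ENNReal.ofReal_lt_ofReal_iff (by linarith)]; linarith) h2
      obtain ⟨w, hw⟩ := lt_iSup_iff.mp h3
      refine ⟨w, fun y hy => ?_⟩
      by_contra hyc
      have h4 : EMetric.infEdist xi (f ⁻¹' star K w)ᶜ ≤ edist xi y :=
        EMetric.infEdist_le_edist_of_mem hyc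
      have hdy : dist xi y ≤ B := hUB i xi hxi y hy
      have h5 : EMetric.infEdist xi (f ⁻¹' star K w)ᶜ ≤ ENNReal.ofReal (B+1) := by
        refine le_trans h4 ?_
        rw [edist_dist]
        exact ENNReal.ofReal_le_ofReal (by linarith)
      exact absurd (lt_of_lt_of_le hw h5) (lt_irrefl _)
  choose v hv using hvex
  -- the functions Ψ
  obtain ⟨Ψ, hΨdef⟩ : ∃ z : ι → X → ℝ, z = fun i x =>
    max ((min (EMetric.infEdist x (U i)ᶜ) (ENNReal.ofReal R)).toReal - (T+2)) 0 := ⟨_, rfl⟩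
  have hΨnn : ∀ i x, 0 ≤ Ψ i x := fun i x => by simp only [hΨdef]; exact le_max_right _ _
  have hΨlip : ∀ i x y, |Ψ i x - Ψ i y| ≤ dist x y := by
    intro i x y
    have := lip_toReal_min (U i)ᶜ (ENNReal.ofReal R) ofReal_ne_top x y
    simp only [hΨdef]
    rw [abs_le] at this ⊢
    constructor
    · rcases le_or_gt ((min (EMetric.infEdist y (U i)ᶜ) (ENNReal.ofReal R)).toReal - (T+2)) 0 with hc | hc
      · have h1 : max ((min (EMetric.infEdist y (U i)ᶜ) (ENNReal.ofReal R)).toReal - (T+2)) 0 = 0 := max_eq_right hc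
        have h2 : 0 ≤ max ((min (EMetric.infEdist x (U i)ᶜ) (ENNReal.ofReal R)).toReal - (T+2)) 0 := le_max_right _ _
        rw [h1]; linarith [dist_nonneg (x := x) (y := y)]
      · have h1 : max ((min (EMetric.infEdist y (U i)ᶜ) (ENNReal.ofReal R)).toReal - (T+2)) 0
            = (min (EMetric.infEdist y (U i)ᶜ) (ENNReal.ofReal R)).toReal - (T+2) := max_eq_left hc.le
        rw [h1]
        have h2 : (min (EMetric.infEdist x (U i)ᶜ) (ENNReal.ofReal R)).toReal - (T+2)
            ≤ max ((min (EMetric.infEdist x (U i)ᶜ) (ENNReal.ofReal R)).toReal - (T+2)) 0 := le_max_left _ _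
        linarith [this.1]
    · rcases le_or_gt ((min (EMetric.infEdist x (U i)ᶜ) (ENNReal.ofReal R)).toReal - (T+2)) 0 with hc | hc
      · have h1 : max ((min (EMetric.infEdist x (U i)ᶜ) (ENNReal.ofReal R)).toReal - (T+2)) 0 = 0 := max_eq_right hc
        have h2 : 0 ≤ max ((min (EMetric.infEdist y (U i)ᶜ) (ENNReal.ofReal R)).toReal - (T+2)) 0 := le_max_right _ _
        rw [h1]; linarith [dist_nonneg (x := x) (y := y)]
      · have h1 : max ((min (EMetric.infEdist x (U i)ᶜ) (ENNReal.ofReal R)).toReal - (T+2)) 0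
            = (min (EMetric.infEdist x (U i)ᶜ) (ENNReal.ofReal R)).toReal - (T+2) := max_eq_left hc.le
        rw [h1]
        have h2 : (min (EMetric.infEdist y (U i)ᶜ) (ENNReal.ofReal R)).toReal - (T+2)
            ≤ max ((min (EMetric.infEdist y (U i)ᶜ) (ENNReal.ofReal R)).toReal - (T+2)) 0 := le_max_left _ _
        linarith [this.2]
  have hΨU : ∀ i x, 0 < Ψ i x → ∀ z, dist x z ≤ T+1 → z ∈ U i := by
    intro i x hx z hz
    simp only [hΨdef] at hx
    simp only [lt_max_iff, sub_pos, lt_self_iff_false, or_false] at hx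
    by_contra hzc
    have h1 : EMetric.infEdist x (U i)ᶜ ≤ edist x z := EMetric.infEdist_le_edist_of_mem hzc
    have h2 : min (EMetric.infEdist x (U i)ᶜ) (ENNReal.ofReal R) ≤ ENNReal.ofReal (T+1) := by
      refine le_trans (min_le_left _ _) (le_trans h1 ?_)
      rw [edist_dist]; exact ENNReal.ofReal_le_ofReal hz
    have h3 := ENNReal.toReal_mono ofReal_ne_top h2
    rw [ENNReal.toReal_ofReal (by linarith)] at h3
    linarith
  have hΨdeep : ∀ x, ∃ i, R₁ ≤ Ψ i x := by
    intro x
    obtain ⟨i, hi⟩ := hdeep x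
    exact ⟨i, by simp only [hΨdef]; rw [hR₁def]; exact le_max_of_le_left (by linarith)⟩
  -- the index sets
  have hJfin : ∀ x, {i | 0 < Ψ i x}.Finite := by
    intro x
    apply Set.Finite.subset (Set.finite_of_encard_le_coe (k := n+1) ?_) (s := {i | 0 < (min (EMetric.infEdist x (U i)ᶜ) (ENNReal.ofReal R)).toReal})
    · intro i hi
      simp only [Set.mem_setOf_eq] at hi ⊢
      simp only [hΨdef, lt_max_iff] at hi
      rcases hi with hi | hi
      · linarith
      · exact absurd hi (lt_irrefl 0)
    · exact_mod_cast hmult x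
  have hΨen : ∀ x, {i | 0 < Ψ i x}.encard ≤ (n:ℕ∞)+1 := by
    intro x
    refine le_trans (Set.encard_mono ?_) (hmult x)
    intro i hi
    simp only [Set.mem_setOf_eq] at hi ⊢
    simp only [hΨdef, lt_max_iff, lt_self_iff_false, or_false, sub_pos] at hi
    linarith
  obtain ⟨Jf, hJfdef⟩ : ∃ z : X → Finset ι, z = fun x => (hJfin x).toFinset := ⟨_, rfl⟩
  have hJmem : ∀ x i, i ∈ Jf x ↔ 0 < Ψ i x := by
    intro x i; simp only [hJfdef]; simp [Set.Finite.mem_toFinset]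
  have hΨ0 : ∀ x i, i ∉ Jf x → Ψ i x = 0 := fun x i hi =>
    le_antisymm (not_lt.1 fun hpos => hi ((hJmem x i).2 hpos)) (hΨnn i x)
  have hJcard : ∀ x, (Jf x).card ≤ n+1 := by
    intro x
    have h1 : ((Jf x).card : ℕ∞) ≤ ((n+1:ℕ) : ℕ∞) := by
      simp only [hJfdef]
      rw [← Set.Finite.encard_eq_coe_toFinset_card (hJfin x)]
      refine le_trans (hΨen x) ?_
      push_cast; exact le_rfl
    exact_mod_cast h1
  obtain ⟨Φ, hΦdef⟩ : ∃ z : X → ℝ, z = fun x => ∑ i ∈ Jf x, Ψ i x := ⟨_, rfl⟩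
  have hΦsup : ∀ (x : X) (F : Finset ι), Jf x ⊆ F → Φ x = ∑ i ∈ F, Ψ i x := by
    intro x F hF
    simp only [hΦdef]
    exact Finset.sum_subset hF (fun i _ hi => hΨ0 x i hi)
  have hΦlb : ∀ x, R₁ ≤ Φ x := by
    intro x
    obtain ⟨i, hi⟩ := hΨdeep x
    have hiJ : i ∈ Jf x := (hJmem x i).2 (lt_of_lt_of_le hR₁pos hi)
    simp only [hΦdef]
    exact le_trans hi (Finset.single_le_sum (fun j _ => hΨnn j x) hiJ)
  have hΦpos : ∀ x, 0 < Φ x := fun x => lt_of_lt_of_le hR₁pos (hΦlb x)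
  have hcard2 : ∀ x y, ((Jf x ∪ Jf y).card : ℝ) ≤ 2*(n+1) := by
    intro x y
    have h1 : (Jf x ∪ Jf y).card ≤ (n+1) + (n+1) :=
      le_trans (Finset.card_union_le _ _) (add_le_add (hJcard x) (hJcard y))
    have h2 : ((Jf x ∪ Jf y).card : ℝ) ≤ (((n+1) + (n+1) : ℕ) : ℝ) := by exact_mod_cast h1
    refine le_trans h2 ?_
    push_cast; linarith
  have hsumdiff : ∀ x y, ∑ i ∈ Jf x ∪ Jf y, |Ψ i x - Ψ i y| ≤ 2*(n+1) * dist x y := by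
    intro x y
    calc ∑ i ∈ Jf x ∪ Jf y, |Ψ i x - Ψ i y| ≤ ∑ _i ∈ Jf x ∪ Jf y, dist x y :=
        Finset.sum_le_sum (fun i _ => hΨlip i x y)
      _ = ((Jf x ∪ Jf y).card : ℝ) * dist x y := by rw [Finset.sum_const, nsmul_eq_mul]
      _ ≤ 2*(n+1) * dist x y := mul_le_mul_of_nonneg_right (hcard2 x y) dist_nonneg
  have hΦdiff : ∀ x y, |Φ x - Φ y| ≤ 2*(n+1) * dist x y := by
    intro x y
    rw [hΦsup x (Jf x ∪ Jf y) Finset.subset_union_left,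
        hΦsup y (Jf x ∪ Jf y) Finset.subset_union_right, ← Finset.sum_sub_distrib]
    exact le_trans (Finset.abs_sum_le_sum_abs _ _) (hsumdiff x y)
  -- the far-field map g
  have hgsupp : ∀ x, (support fun w => ∑ i ∈ Jf x, if v i = w then Ψ i x / Φ x else 0).Finite := by
    intro x
    apply Set.Finite.subset ((Jf x).image v).finite_toSet
    intro w hw
    simp only [mem_support] at hw
    by_contra hwc
    apply hw
    apply Finset.sum_eq_zero
    intro i hi
    rw [if_neg]
    intro hvi
    exact hwc (Finset.mem_coe.mpr (Finset.mem_image.mpr ⟨i, hi, hvi⟩))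
  obtain ⟨g, hgdef⟩ : ∃ z : X → ellOne S, z = fun x => mkEll _ (hgsupp x) := ⟨_, rfl⟩
  have hgco : ∀ x w, (g x : S → ℝ) w = ∑ i ∈ Jf x, if v i = w then Ψ i x / Φ x else 0 := by
    intro x w; simp only [hgdef]; rfl
  have hgnn : ∀ x w, 0 ≤ (g x : S → ℝ) w := by
    intro x w; rw [hgco]
    refine Finset.sum_nonneg fun i _ => ?_
    split
    · exact div_nonneg (hΨnn i x) (hΦpos x).le
    · exact le_rfl
  have hgsuppv : ∀ x w, (g x : S → ℝ) w ≠ 0 → ∃ i ∈ Jf x, v i = w := by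
    intro x w hw
    by_contra hc; push_neg at hc
    exact hw (by rw [hgco]; exact Finset.sum_eq_zero fun i hi => if_neg (hc i hi))
  have hxmem : ∀ x i, i ∈ Jf x → x ∈ U i := by
    intro x i hi
    exact hΨU i x ((hJmem x i).1 hi) x (by rw [dist_self]; linarith)
  have hgsuppf : ∀ x, support ((g x : S → ℝ)) ⊆ support ((f x : S → ℝ)) := by
    intro x w hw
    obtain ⟨i, hi, hvi⟩ := hgsuppv x w hw
    have hst := hv i (hxmem x i hi)
    rw [Set.mem_preimage] at hst
    rw [mem_support, ← hvi]
    exact ne_of_gt hst.2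
  have hgpos : ∀ x i, i ∈ Jf x → 0 < (g x : S → ℝ) (v i) := by
    intro x i hi
    rw [hgco]
    apply Finset.sum_pos'
    · intro j _
      split
      · exact div_nonneg (hΨnn j x) (hΦpos x).le
      · exact le_rfl
    · exact ⟨i, hi, by rw [if_pos rfl]; exact div_pos ((hJmem x i).1 hi) (hΦpos x)⟩
  have hgext : ∀ x w (F : Finset ι), Jf x ⊆ F →
      (g x : S → ℝ) w = ∑ i ∈ F, if v i = w then Ψ i x / Φ x else 0 := by
    intro x w F hF
    rw [hgco]
    refine Finset.sum_subset hF fun i _ hi => ?_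
    rw [hΨ0 x i hi]
    split <;> simp
  have hgsum : ∀ x, ∑' w, (g x : S → ℝ) w = 1 := by
    intro x
    have h0 : ∀ w ∉ (Jf x).image v, (g x : S → ℝ) w = 0 := by
      intro w hw
      by_contra h
      obtain ⟨i, hi, hvi⟩ := hgsuppv x w h
      exact hw (Finset.mem_image.mpr ⟨i, hi, hvi⟩)
    rw [tsum_eq_finsum_ell (g x) ((Jf x).image v) h0]
    rw [Finset.sum_congr rfl fun w _ => hgco x w]
    rw [Finset.sum_comm]
    have h1 : ∀ i ∈ Jf x, (∑ w ∈ (Jf x).image v, if v i = w then Ψ i x / Φ x else 0)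
        = Ψ i x / Φ x := by
      intro i hi
      rw [Finset.sum_ite_eq ((Jf x).image v) (v i) (fun _ => Ψ i x / Φ x)]
      rw [if_pos (Finset.mem_image_of_mem v hi)]
    rw [Finset.sum_congr rfl h1, ← Finset.sum_div]
    rw [show ∑ i ∈ Jf x, Ψ i x = Φ x from by simp only [hΦdef]]
    exact div_self (hΦpos x).ne'
  have hgfin : ∀ x, (support ((g x : S → ℝ))).Finite := by
    intro x; simp only [hgdef]; exact hgsupp x
  have hgsimplex : ∀ x, g x ∈ fullSimplex S := fun x => ⟨hgnn x, hgfin x, hgsum x⟩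
  have hgK : ∀ x, g x ∈ K := fun x => hK.2 (f x) (hfK x) (g x) (hgsimplex x) (hgsuppf x)
  have hgcard : ∀ x, (support ((g x : S → ℝ))).encard ≤ (n:ℕ∞)+1 := by
    intro x
    have h1 : support ((g x : S → ℝ)) ⊆ (((Jf x).image v : Finset S) : Set S) := by
      intro w hw
      obtain ⟨i, hi, hvi⟩ := hgsuppv x w hw
      exact Finset.mem_coe.mpr (Finset.mem_image.mpr ⟨i, hi, hvi⟩)
    refine le_trans (Set.encard_mono h1) ?_
    rw [Set.encard_coe_eq_coe_finsetCard]
    have h2 : ((Jf x).image v).card ≤ n+1 := le_trans Finset.card_image_le (hJcard x)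
    exact_mod_cast h2
  have hgsk : ∀ x, g x ∈ skeleton S n := fun x => ⟨hgsimplex x, hgcard x⟩
  -- Lipschitz estimate for g
  have hglip : ∀ x y, ‖g x - g y‖ ≤ ε/4 * dist x y := by
    intro x y
    have hΦx := hΦpos x
    have hΦy := hΦpos y
    have hd0 : (0:ℝ) ≤ dist x y := dist_nonneg
    set F := Jf x ∪ Jf y with hF
    set W := F.image v with hW
    have hsub : ∀ w ∉ W, ((g x - g y : ellOne S) : S → ℝ) w = 0 := by
      intro w hw
      rw [lp.coeFn_sub, Pi.sub_apply]
      have hx0 : (g x : S → ℝ) w = 0 := by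
        by_contra h
        obtain ⟨i, hi, hvi⟩ := hgsuppv x w h
        exact hw (Finset.mem_image.mpr ⟨i, Finset.mem_union_left _ hi, hvi⟩)
      have hy0 : (g y : S → ℝ) w = 0 := by
        by_contra h
        obtain ⟨i, hi, hvi⟩ := hgsuppv y w h
        exact hw (Finset.mem_image.mpr ⟨i, Finset.mem_union_right _ hi, hvi⟩)
      rw [hx0, hy0, sub_zero]
    rw [norm_eq_finsum _ W hsub]
    have hco : ∀ w, ((g x - g y : ellOne S) : S → ℝ) w
        = ∑ i ∈ F, (if v i = w then Ψ i x / Φ x - Ψ i y / Φ y else 0) := by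
      intro w
      rw [lp.coeFn_sub, Pi.sub_apply,
        hgext x w F Finset.subset_union_left, hgext y w F Finset.subset_union_right,
        ← Finset.sum_sub_distrib]
      exact Finset.sum_congr rfl fun i _ => by split <;> simp
    have hS1 : ∑ i ∈ F, |Ψ i x - Ψ i y| ≤ 2*(n+1) * dist x y := hsumdiff x y
    calc ∑ w ∈ W, |((g x - g y : ellOne S) : S → ℝ) w|
        ≤ ∑ w ∈ W, ∑ i ∈ F, (if v i = w then |Ψ i x / Φ x - Ψ i y / Φ y| else 0) := by
          refine Finset.sum_le_sum fun w _ => ?_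
          rw [hco w]
          refine le_trans (Finset.abs_sum_le_sum_abs _ _) ?_
          refine Finset.sum_le_sum fun i _ => ?_
          split <;> simp
      _ = ∑ i ∈ F, ∑ w ∈ W, (if v i = w then |Ψ i x / Φ x - Ψ i y / Φ y| else 0) :=
          Finset.sum_comm
      _ = ∑ i ∈ F, |Ψ i x / Φ x - Ψ i y / Φ y| := by
          refine Finset.sum_congr rfl fun i hi => ?_
          rw [Finset.sum_ite_eq W (v i) (fun _ => |Ψ i x / Φ x - Ψ i y / Φ y|),
            if_pos (Finset.mem_image_of_mem v hi)]
      _ ≤ ∑ i ∈ F, (|Ψ i x - Ψ i y| / Φ x + Ψ i y * |Φ y - Φ x| / (Φ x * Φ y)) := by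
          refine Finset.sum_le_sum fun i _ => ?_
          have heq : Ψ i x / Φ x - Ψ i y / Φ y
              = (Ψ i x - Ψ i y)/Φ x + Ψ i y * (Φ y - Φ x) / (Φ x * Φ y) := by
            field_simp
            ring
          have e1 : |(Ψ i x - Ψ i y)/Φ x| = |Ψ i x - Ψ i y|/Φ x := by
            rw [abs_div, abs_of_pos hΦx]
          have e2 : |Ψ i y * (Φ y - Φ x) / (Φ x * Φ y)| = Ψ i y * |Φ y - Φ x| / (Φ x * Φ y) := by
            rw [abs_div, abs_mul, abs_of_nonneg (hΨnn i y), abs_of_pos (mul_pos hΦx hΦy)]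
          rw [heq]
          exact le_trans (abs_add_le _ _) (by rw [e1, e2])
      _ = (∑ i ∈ F, |Ψ i x - Ψ i y|) / Φ x
          + (∑ i ∈ F, Ψ i y) * |Φ y - Φ x| / (Φ x * Φ y) := by
          rw [Finset.sum_add_distrib, Finset.sum_div, Finset.sum_mul, Finset.sum_div]
      _ ≤ (2*(n+1) * dist x y) / Φ x + Φ y * (2*(n+1) * dist x y) / (Φ x * Φ y) := by
          have hΦyF : ∑ i ∈ F, Ψ i y = Φ y := (hΦsup y F Finset.subset_union_right).symm
          rw [hΦyF]
          gcongr
          · rw [abs_sub_comm]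
            exact hΦdiff x y
      _ = 4*(n+1) * dist x y / Φ x := by field_simp; ring
      _ ≤ 4*(n+1) * dist x y / R₁ := by gcongr; exact hΦlb x
      _ = (4*(n+1)/R₁) * dist x y := by ring
      _ ≤ ε/4 * dist x y := by
          refine mul_le_mul_of_nonneg_right ?_ hd0
          rw [div_le_div_iff₀ hR₁pos (by norm_num : (0:ℝ) < 4)]
          have h5 : ε * (16*(n+1)/ε) = 16*(n+1) := by field_simp
          linarith [mul_le_mul_of_nonneg_left hR₁a hε.le, h5]
  -- the collar function lam
  obtain ⟨lam, hlamdef⟩ : ∃ z : X → ℝ,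
    z = fun x => (min (EMetric.infEdist x A) (ENNReal.ofReal T)).toReal / T := ⟨_, rfl⟩
  have hlam0 : ∀ x, 0 ≤ lam x := fun x => by
    simp only [hlamdef]; exact div_nonneg ENNReal.toReal_nonneg hTpos.le
  have hlam1 : ∀ x, lam x ≤ 1 := by
    intro x
    simp only [hlamdef]
    rw [div_le_one hTpos]
    have h1 : (min (EMetric.infEdist x A) (ENNReal.ofReal T)) ≤ ENNReal.ofReal T :=
      min_le_right _ _
    have h2 := ENNReal.toReal_mono ofReal_ne_top h1
    rwa [ENNReal.toReal_ofReal hTpos.le] at h2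
  have hlamA : ∀ a ∈ A, lam a = 0 := by
    intro a ha
    simp only [hlamdef]
    rw [show EMetric.infEdist a A = 0 from EMetric.infEdist_zero_of_mem ha]
    simp
  have hlamlip : ∀ x y, |lam x - lam y| ≤ dist x y / T := by
    intro x y
    simp only [hlamdef]
    rw [div_sub_div_same, abs_div, abs_of_pos hTpos]
    gcongr
    exact lip_toReal_min A (ENNReal.ofReal T) ofReal_ne_top x y
  have hlamlt : ∀ x, lam x < 1 → EMetric.infEdist x A < ENNReal.ofReal T := by
    intro x hx
    by_contra hc
    push_neg at hc
    have h1 : min (EMetric.infEdist x A) (ENNReal.ofReal T) = ENNReal.ofReal T := min_eq_right hc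
    simp only [hlamdef] at hx
    rw [h1, ENNReal.toReal_ofReal hTpos.le, div_self hTpos.ne'] at hx
    exact lt_irrefl 1 hx
  -- choice of near point in A
  have haex : ∀ x, x ∉ A → EMetric.infEdist x A < ENNReal.ofReal T →
      ∃ z, z ∈ A ∧ dist x z < T+1 := by
    intro x _ hlt
    have h2 : EMetric.infEdist x A < ENNReal.ofReal (T+1) :=
      lt_of_lt_of_le hlt (ENNReal.ofReal_le_ofReal (by linarith))
    obtain ⟨z, hzA, hz⟩ := EMetric.infEdist_lt_iff.mp h2
    exact ⟨z, hzA, edist_lt_ofReal.mp hz⟩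
  obtain ⟨aa, haadef⟩ : ∃ z : X → X, z = fun x =>
    if hx : x ∈ A then x
    else if hlt : EMetric.infEdist x A < ENNReal.ofReal T then (haex x hx hlt).choose
    else x := ⟨_, rfl⟩
  have haaA : ∀ x ∈ A, aa x = x := by
    intro x hx; simp only [haadef]; rw [dif_pos hx]
  have haaspec : ∀ x, lam x < 1 → aa x ∈ A ∧ dist x (aa x) ≤ T+1 := by
    intro x hx
    by_cases hxA : x ∈ A
    · rw [haaA x hxA]; exact ⟨hxA, by rw [dist_self]; linarith⟩
    · have hlt := hlamlt x hx
      simp only [haadef]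
      rw [dif_neg hxA, dif_pos hlt]
      obtain ⟨h1, h2⟩ := (haex x hxA hlt).choose_spec
      exact ⟨h1, h2.le⟩
  -- the restricted map Q
  have hqfin : ∀ x, (support fun w => if w ∈ σ x then (f (aa x) : S → ℝ) w else 0).Finite := by
    intro x
    apply Set.Finite.subset (σ x).finite_toSet
    intro w hw
    simp only [mem_support] at hw
    rw [Finset.mem_coe]
    by_contra hc
    rw [if_neg hc] at hw
    exact hw rfl
  obtain ⟨Q, hQdef⟩ : ∃ z : X → ellOne S, z = fun x => mkEll _ (hqfin x) := ⟨_, rfl⟩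
  have hQco : ∀ x w, (Q x : S → ℝ) w = if w ∈ σ x then (f (aa x) : S → ℝ) w else 0 := by
    intro x w; simp only [hQdef]; rfl
  have hQnn : ∀ x w, 0 ≤ (Q x : S → ℝ) w := by
    intro x w; rw [hQco]; split
    · exact hfnn (aa x) w
    · exact le_rfl
  have hQabs : ∀ x w, |(Q x : S → ℝ) w| ≤ |(f (aa x) : S → ℝ) w| := by
    intro x w; rw [hQco]; split
    · exact le_rfl
    · simp
  obtain ⟨ρ, hρdef⟩ : ∃ z : X → ℝ, z = fun x => ‖Q x‖ := ⟨_, rfl⟩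
  have hρ1 : ∀ x, ρ x ≤ 1 := by
    intro x
    simp only [hρdef]
    calc ‖Q x‖ ≤ ‖f (aa x)‖ := norm_le_of_abs_le _ _ (hQabs x)
      _ = 1 := simplex_norm_one (hfsimp (aa x))
  have hQfa : ∀ x, ‖Q x - f (aa x)‖ ≤ ‖f x - f (aa x)‖ := by
    intro x
    apply norm_le_of_abs_le
    intro w
    rw [lp.coeFn_sub, Pi.sub_apply, lp.coeFn_sub, Pi.sub_apply, hQco]
    by_cases hw : w ∈ σ x
    · rw [if_pos hw]; simp
    · rw [if_neg hw]
      have hfx0 : (f x : S → ℝ) w = 0 := by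
        by_contra h; exact hw ((hσmem x w).mpr h)
      rw [hfx0]
  have hQnear : ∀ x, lam x < 1 → ‖Q x - f (aa x)‖ ≤ δ*(T+2) := by
    intro x hx
    obtain ⟨_, hdxa⟩ := haaspec x hx
    refine le_trans (hQfa x) ?_
    have h1 := hf.2.1 x (aa x)
    rw [dist_eq_norm] at h1
    calc ‖f x - f (aa x)‖ ≤ δ * dist x (aa x) + δ := h1
      _ ≤ δ * (T+1) + δ := by nlinarith
      _ = δ*(T+2) := by ring
  have hρlb : ∀ x, lam x < 1 → 1 - δ*(T+2) ≤ ρ x := by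
    intro x hx
    have h2 := hQnear x hx
    have h3 := abs_norm_sub_norm_le (Q x) (f (aa x))
    rw [simplex_norm_one (hfsimp (aa x))] at h3
    rw [abs_le] at h3
    simp only [hρdef]
    linarith [h3.1]
  have hρhalf : ∀ x, lam x < 1 → 1/2 ≤ ρ x := by
    intro x hx
    have h1 := hρlb x hx
    have h2 : δ*(T+2) ≤ 1/2 := by
      calc δ*(T+2) ≤ (1/(2*(T+3)))*(T+3) := by
            apply mul_le_mul hδb (by linarith) (by linarith) (by positivity)
        _ = 1/2 := by field_simp
    linarith
  have hQdiff : ∀ x y, lam x < 1 → lam y < 1 → ‖Q x - Q y‖ ≤ δ * dist x y + δ*(4*T+9) := by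
    intro x y hx hy
    obtain ⟨hAx, hdx⟩ := haaspec x hx
    obtain ⟨hAy, hdy⟩ := haaspec y hy
    have hfd : ‖f (aa x) - f (aa y)‖ ≤ δ * (dist x y + 2*T+2) + δ := by
      have h1 := hf.2.1 (aa x) (aa y)
      rw [dist_eq_norm] at h1
      have h2 : dist (aa x) (aa y) ≤ dist x y + 2*T + 2 := by
        calc dist (aa x) (aa y) ≤ dist (aa x) x + dist x (aa y) := dist_triangle _ _ _
          _ ≤ dist (aa x) x + (dist x y + dist y (aa y)) := by
              linarith [dist_triangle x y (aa y)]
          _ ≤ (T+1) + (dist x y + (T+1)) := by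
              rw [dist_comm (aa x) x]; linarith
          _ = dist x y + 2*T + 2 := by ring
      calc ‖f (aa x) - f (aa y)‖ ≤ δ * dist (aa x) (aa y) + δ := h1
        _ ≤ δ * (dist x y + 2*T+2) + δ := by nlinarith
    calc ‖Q x - Q y‖ = ‖(Q x - f (aa x)) + (f (aa x) - f (aa y)) + (f (aa y) - Q y)‖ := by
          congr 1; abel
      _ ≤ ‖(Q x - f (aa x)) + (f (aa x) - f (aa y))‖ + ‖f (aa y) - Q y‖ := norm_add_le _ _
      _ ≤ ‖Q x - f (aa x)‖ + ‖f (aa x) - f (aa y)‖ + ‖f (aa y) - Q y‖ := by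
          linarith [norm_add_le (Q x - f (aa x)) (f (aa x) - f (aa y))]
      _ ≤ δ*(T+2) + (δ * (dist x y + 2*T+2) + δ) + δ*(T+2) := by
          have := hQnear x hx
          have := hQnear y hy
          rw [norm_sub_rev (f (aa y)) (Q y)]
          linarith
      _ ≤ δ * dist x y + δ*(4*T+9) := by nlinarith
  -- the normalized near map r
  obtain ⟨r, hrdef⟩ : ∃ z : X → ellOne S, z = fun x =>
    if 1/2 ≤ ρ x then (ρ x)⁻¹ • Q x else g x := ⟨_, rfl⟩
  have hρpos : ∀ x, lam x < 1 → 0 < ρ x := fun x hx =>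
    lt_of_lt_of_le (by norm_num) (hρhalf x hx)
  have hrmain : ∀ x, lam x < 1 → r x = (ρ x)⁻¹ • Q x := by
    intro x hx; simp only [hrdef]; rw [if_pos (hρhalf x hx)]
  have hrco : ∀ x, lam x < 1 → ∀ w, (r x : S → ℝ) w = (ρ x)⁻¹ * (Q x : S → ℝ) w := by
    intro x hx w
    rw [hrmain x hx, lp.coeFn_smul, Pi.smul_apply, smul_eq_mul]
  have hQsum : ∀ x, ∑' w, (Q x : S → ℝ) w = ρ x := by
    intro x
    simp only [hρdef]
    rw [norm_eq_tsum_abs]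
    exact tsum_congr fun w => (abs_of_nonneg (hQnn x w)).symm
  have hQfin : ∀ x, (support ((Q x : S → ℝ))).Finite := by
    intro x; simp only [hQdef]; exact hqfin x
  have hrsimplex : ∀ x, r x ∈ fullSimplex S := by
    intro x
    simp only [hrdef]
    split
    case isTrue hρx =>
      have hρp : 0 < ρ x := lt_of_lt_of_le (by norm_num) hρx
      have hsm : ∀ w, (((ρ x)⁻¹ • Q x : ellOne S) : S → ℝ) w = (ρ x)⁻¹ * (Q x : S → ℝ) w :=
        fun w => by rw [lp.coeFn_smul, Pi.smul_apply, smul_eq_mul]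
      refine ⟨fun s => ?_, ?_, ?_⟩
      · rw [hsm]
        exact mul_nonneg (inv_nonneg.mpr hρp.le) (hQnn x s)
      · refine Set.Finite.subset (hQfin x) ?_
        intro w hw
        rw [mem_support, hsm] at hw
        rw [mem_support]
        intro h0; exact hw (by rw [h0, mul_zero])
      · calc ∑' w, (((ρ x)⁻¹ • Q x : ellOne S) : S → ℝ) w
            = ∑' w, (ρ x)⁻¹ * (Q x : S → ℝ) w := tsum_congr hsm
          _ = (ρ x)⁻¹ * ∑' w, (Q x : S → ℝ) w := tsum_mul_left
          _ = (ρ x)⁻¹ * ρ x := by rw [hQsum]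
          _ = 1 := inv_mul_cancel₀ hρp.ne'
    case isFalse _ => exact hgsimplex x
  have hQsuppf : ∀ x, support ((Q x : S → ℝ)) ⊆ support ((f x : S → ℝ)) := by
    intro x w hw
    rw [mem_support, hQco] at hw
    rw [mem_support]
    intro h0
    exact hw (if_neg fun hmem => ((hσmem x w).1 hmem) h0)
  have hrsuppf : ∀ x, support ((r x : S → ℝ)) ⊆ support ((f x : S → ℝ)) := by
    intro x
    simp only [hrdef]
    split
    · intro w hw
      rw [mem_support, lp.coeFn_smul, Pi.smul_apply, smul_eq_mul] at hw
      have hQw : (Q x : S → ℝ) w ≠ 0 := fun h0 => hw (by rw [h0, mul_zero])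
      exact hQsuppf x hQw
    · exact hgsuppf x
  have hrcard : ∀ x, lam x < 1 → (support ((r x : S → ℝ))).encard ≤ (n:ℕ∞)+1 := by
    intro x hx
    obtain ⟨hAx, _⟩ := haaspec x hx
    have hskel := (hfA (aa x) hAx).2.2
    refine le_trans (Set.encard_mono ?_) hskel
    intro w hw
    rw [mem_support, hrco x hx w] at hw
    have hQw : (Q x : S → ℝ) w ≠ 0 := fun h0 => hw (by rw [h0, mul_zero])
    rw [hQco] at hQw
    rw [mem_support]
    intro h0
    apply hQw
    split
    · exact h0
    · rfl
  have hgr : ∀ x, lam x < 1 → support ((g x : S → ℝ)) ⊆ support ((r x : S → ℝ)) := by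
    intro x hx w hw
    obtain ⟨i, hi, hvi⟩ := hgsuppv x w hw
    obtain ⟨hAx, hdxa⟩ := haaspec x hx
    have hax : aa x ∈ U i := hΨU i x ((hJmem x i).1 hi) (aa x) hdxa
    have hfax : 0 < (f (aa x) : S → ℝ) (v i) := by
      have hst := hv i hax; rw [Set.mem_preimage] at hst; exact hst.2
    have hfx : 0 < (f x : S → ℝ) (v i) := by
      have hst := hv i (hxmem x i hi); rw [Set.mem_preimage] at hst; exact hst.2
    have hQw : 0 < (Q x : S → ℝ) (v i) := by
      rw [hQco, if_pos ((hσmem x (v i)).2 (ne_of_gt hfx))]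
      exact hfax
    rw [← hvi, mem_support, hrco x hx]
    exact ne_of_gt (mul_pos (inv_pos.mpr (hρpos x hx)) hQw)
  -- the filler
  obtain ⟨hh, hhdef⟩ : ∃ z : X → ellOne S, z = fun x =>
    (1 - lam x) • r x + lam x • g x := ⟨_, rfl⟩
  have hhco : ∀ x w, (hh x : S → ℝ) w
      = (1 - lam x) * (r x : S → ℝ) w + lam x * (g x : S → ℝ) w := by
    intro x w
    simp only [hhdef]
    rw [lp.coeFn_add, Pi.add_apply, lp.coeFn_smul, Pi.smul_apply, lp.coeFn_smul, Pi.smul_apply,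
      smul_eq_mul, smul_eq_mul]
  have hhnn : ∀ x w, 0 ≤ (hh x : S → ℝ) w := by
    intro x w; rw [hhco]
    have h1 := hlam0 x; have h2 := hlam1 x
    exact add_nonneg (mul_nonneg (by linarith) ((hrsimplex x).1 w))
      (mul_nonneg h1 (hgnn x w))
  have hhsuppf : ∀ x, support ((hh x : S → ℝ)) ⊆ support ((f x : S → ℝ)) := by
    intro x w hw
    rw [mem_support, hhco] at hw
    by_cases hrw : (r x : S → ℝ) w = 0
    · rw [hrw, mul_zero, zero_add] at hw
      have hgw : (g x : S → ℝ) w ≠ 0 := fun h0 => hw (by rw [h0, mul_zero])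
      exact hgsuppf x hgw
    · exact hrsuppf x hrw
  have hhfin : ∀ x, (support ((hh x : S → ℝ))).Finite :=
    fun x => (hffin x).subset (hhsuppf x)
  have hhsum : ∀ x, ∑' w, (hh x : S → ℝ) w = 1 := by
    intro x
    have hr1 : Summable ((r x : S → ℝ)) := by
      have h := summable_abs_ell (r x)
      exact Summable.of_norm (by simpa [Real.norm_eq_abs] using h)
    have hg1 : Summable ((g x : S → ℝ)) := by
      have h := summable_abs_ell (g x)
      exact Summable.of_norm (by simpa [Real.norm_eq_abs] using h)
    calc ∑' w, (hh x : S → ℝ) w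
        = ∑' w, ((1 - lam x) * (r x : S → ℝ) w + lam x * (g x : S → ℝ) w) :=
          tsum_congr (hhco x)
      _ = (∑' w, (1 - lam x) * (r x : S → ℝ) w) + ∑' w, lam x * (g x : S → ℝ) w :=
          Summable.tsum_add (hr1.mul_left _) (hg1.mul_left _)
      _ = (1 - lam x) * (∑' w, (r x : S → ℝ) w) + lam x * (∑' w, (g x : S → ℝ) w) := by
          rw [tsum_mul_left, tsum_mul_left]
      _ = 1 := by rw [(hrsimplex x).2.2, hgsum x]; ring
  have hhsimplex : ∀ x, hh x ∈ fullSimplex S := fun x => ⟨hhnn x, hhfin x, hhsum x⟩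
  have hhK : ∀ x, hh x ∈ K := fun x => hK.2 (f x) (hfK x) (hh x) (hhsimplex x) (hhsuppf x)
  have hhcard : ∀ x, (support ((hh x : S → ℝ))).encard ≤ (n:ℕ∞)+1 := by
    intro x
    rcases lt_or_ge (lam x) 1 with hx | hx
    · refine le_trans (Set.encard_mono ?_) (hrcard x hx)
      intro w hw
      rw [mem_support, hhco] at hw
      by_cases hrw : (r x : S → ℝ) w = 0
      · rw [hrw, mul_zero, zero_add] at hw
        have hgw : (g x : S → ℝ) w ≠ 0 := fun h0 => hw (by rw [h0, mul_zero])
        exact hgr x hx hgw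
      · exact hrw
    · have hx1 : lam x = 1 := le_antisymm (hlam1 x) hx
      refine le_trans (Set.encard_mono ?_) (hgcard x)
      intro w hw
      rw [mem_support, hhco, hx1] at hw
      rw [mem_support]
      intro h0
      apply hw
      rw [h0]
      ring
  have hhsk : ∀ x, hh x ∈ skeleton S n := fun x => ⟨hhsimplex x, hhcard x⟩
  -- agreement with f on A
  have hhA : ∀ b ∈ A, hh b = f b := by
    intro b hb
    have hlamb := hlamA b hb
    have hab : aa b = b := haaA b hb
    have hQb : Q b = f b := by
      apply lp.ext
      funext w
      rw [hQco, hab]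
      split
      · rfl
      case isFalse hmem =>
        symm
        by_contra h0
        exact hmem ((hσmem b w).2 h0)
    have hρb : ρ b = 1 := by
      simp only [hρdef]; rw [hQb]; exact simplex_norm_one (hfsimp b)
    have hlt : lam b < 1 := by rw [hlamb]; norm_num
    simp only [hhdef]
    rw [hlamb, hrmain b hlt, hρb, hQb]
    simp
  -- Lipschitz bounds
  have hgnorm : ∀ x, ‖g x‖ = 1 := fun x => simplex_norm_one (hgsimplex x)
  have hrnorm : ∀ x, ‖r x‖ = 1 := fun x => simplex_norm_one (hrsimplex x)
  have hrg2 : ∀ x y, ‖r x - g y‖ ≤ 2 := by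
    intro x y
    calc ‖r x - g y‖ ≤ ‖r x‖ + ‖g y‖ := norm_sub_le _ _
      _ = 2 := by rw [hrnorm, hgnorm]; norm_num
  have hrlip : ∀ x y, lam x < 1 → lam y < 1 → ‖r x - r y‖ ≤ 4 * ‖Q x - Q y‖ := by
    intro x y hx hy
    have hρx := hρhalf x hx; have hρy := hρhalf y hy
    have hρxp := hρpos x hx; have hρyp := hρpos y hy
    rw [hrmain x hx, hrmain y hy]
    have hid : (ρ x)⁻¹ • Q x - (ρ y)⁻¹ • Q y
        = (ρ x)⁻¹ • (Q x - Q y) + ((ρ x)⁻¹ - (ρ y)⁻¹) • Q y := by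
      rw [smul_sub, sub_smul]; abel
    rw [hid]
    have h1 : ‖(ρ x)⁻¹ • (Q x - Q y)‖ = (ρ x)⁻¹ * ‖Q x - Q y‖ := by
      rw [norm_smul, Real.norm_eq_abs, abs_of_pos (inv_pos.mpr hρxp)]
    have h2 : ‖((ρ x)⁻¹ - (ρ y)⁻¹) • Q y‖ = |(ρ x)⁻¹ - (ρ y)⁻¹| * ρ y := by
      rw [norm_smul, Real.norm_eq_abs]
      congr 1
      simp only [hρdef]
    have hρdiff : |ρ y - ρ x| ≤ ‖Q x - Q y‖ := by
      have h3 := abs_norm_sub_norm_le (Q y) (Q x)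
      rw [norm_sub_rev] at h3
      simp only [hρdef]
      exact h3
    have h3 : |(ρ x)⁻¹ - (ρ y)⁻¹| * ρ y ≤ 2 * ‖Q x - Q y‖ := by
      have he : (ρ x)⁻¹ - (ρ y)⁻¹ = (ρ y - ρ x)/(ρ x * ρ y) := by
        field_simp
      rw [he, abs_div, abs_of_pos (mul_pos hρxp hρyp)]
      have he2 : |ρ y - ρ x|/(ρ x * ρ y) * ρ y = |ρ y - ρ x| / ρ x := by
        field_simp
      rw [he2]
      calc |ρ y - ρ x|/ρ x ≤ |ρ y - ρ x|/(1/2) := by gcongr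
        _ = 2*|ρ y - ρ x| := by ring
        _ ≤ 2*‖Q x - Q y‖ := by linarith
    have hinv2 : (ρ x)⁻¹ ≤ 2 := by
      have h4 := inv_anti₀ (by norm_num : (0:ℝ) < 1/2) hρx
      norm_num at h4
      exact h4
    calc ‖(ρ x)⁻¹ • (Q x - Q y) + ((ρ x)⁻¹ - (ρ y)⁻¹) • Q y‖
        ≤ ‖(ρ x)⁻¹ • (Q x - Q y)‖ + ‖((ρ x)⁻¹ - (ρ y)⁻¹) • Q y‖ := norm_add_le _ _
      _ ≤ (ρ x)⁻¹ * ‖Q x - Q y‖ + 2 * ‖Q x - Q y‖ := by rw [h1, h2]; linarith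
      _ ≤ 2 * ‖Q x - Q y‖ + 2 * ‖Q x - Q y‖ := by
          have := norm_nonneg (Q x - Q y)
          nlinarith
      _ = 4 * ‖Q x - Q y‖ := by ring
  have h2T : 2/T = ε/4 := by rw [hT]; field_simp; ring
  have hhlip : IsLipschitzLC ε ε hh := by
    intro x y
    have hd0 : (0:ℝ) ≤ dist x y := dist_nonneg
    rw [dist_eq_norm]
    have hlamd : |lam x - lam y| ≤ dist x y / T := hlamlip x y
    have hglxy : ‖g x - g y‖ ≤ ε/4 * dist x y := hglip x y
    have hdT : (dist x y / T) * 2 = ε/4 * dist x y := by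
      rw [show (dist x y / T) * 2 = (2/T) * dist x y from by ring, h2T]
    rcases lt_or_ge (lam x) 1 with hx | hx
    · rcases lt_or_ge (lam y) 1 with hy | hy
      · have hid : hh x - hh y
            = ((1 - lam x) • (r x - r y) + lam x • (g x - g y))
              + (lam x - lam y) • (g y - r y) := by
          simp only [hhdef]
          module
        rw [hid]
        have hb1 : ‖(1 - lam x) • (r x - r y)‖ ≤ 4*(δ*dist x y + δ*(4*T+9)) := by
          rw [norm_smul, Real.norm_eq_abs, abs_of_nonneg (by linarith [hlam1 x])]
          calc (1 - lam x) * ‖r x - r y‖ ≤ 1 * ‖r x - r y‖ := by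
                apply mul_le_mul_of_nonneg_right ?_ (norm_nonneg _)
                linarith [hlam0 x]
            _ = ‖r x - r y‖ := one_mul _
            _ ≤ 4 * ‖Q x - Q y‖ := hrlip x y hx hy
            _ ≤ 4*(δ*dist x y + δ*(4*T+9)) := by
                have := hQdiff x y hx hy; linarith
        have hb2 : ‖lam x • (g x - g y)‖ ≤ ε/4 * dist x y := by
          rw [norm_smul, Real.norm_eq_abs, abs_of_nonneg (hlam0 x)]
          calc lam x * ‖g x - g y‖ ≤ 1 * ‖g x - g y‖ :=
              mul_le_mul_of_nonneg_right (hlam1 x) (norm_nonneg _)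
            _ ≤ ε/4 * dist x y := by rw [one_mul]; exact hglxy
        have hb3 : ‖(lam x - lam y) • (g y - r y)‖ ≤ (dist x y / T) * 2 := by
          rw [norm_smul, Real.norm_eq_abs]
          have hgr2 : ‖g y - r y‖ ≤ 2 := by rw [norm_sub_rev]; exact hrg2 y y
          exact mul_le_mul hlamd hgr2 (norm_nonneg _) (div_nonneg hd0 hTpos.le)
        have hδa' : δ*(16*T+36) ≤ ε := by
          calc δ*(16*T+36) ≤ (ε/(16*T+36))*(16*T+36) :=
              mul_le_mul_of_nonneg_right hδa (by linarith)
            _ = ε := by field_simp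
        have h8 : 8*δ ≤ ε := by nlinarith
        have h49 : 4*(δ*(4*T+9)) ≤ ε := by nlinarith
        have hδd : 4*(δ*dist x y + δ*(4*T+9)) ≤ ε/2*dist x y + ε := by
          nlinarith [mul_le_mul_of_nonneg_right h8 hd0]
        calc ‖((1 - lam x) • (r x - r y) + lam x • (g x - g y))
              + (lam x - lam y) • (g y - r y)‖
            ≤ ‖(1 - lam x) • (r x - r y) + lam x • (g x - g y)‖
              + ‖(lam x - lam y) • (g y - r y)‖ := norm_add_le _ _
          _ ≤ ‖(1 - lam x) • (r x - r y)‖ + ‖lam x • (g x - g y)‖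
              + ‖(lam x - lam y) • (g y - r y)‖ := by
              linarith [norm_add_le ((1 - lam x) • (r x - r y)) (lam x • (g x - g y))]
          _ ≤ (ε/2*dist x y + ε) + ε/4 * dist x y + (dist x y / T) * 2 := by linarith
          _ ≤ ε * dist x y + ε := by rw [hdT]; linarith
      · have hy1 : lam y = 1 := le_antisymm (hlam1 y) hy
        have hid : hh x - hh y = (1 - lam x) • (r x - g y) + lam x • (g x - g y) := by
          simp only [hhdef]; rw [hy1]; module
        rw [hid]
        have h1x : 1 - lam x ≤ dist x y / T := by
          have h5 := hlamlip x y; rw [abs_le, hy1] at h5; linarith [h5.1]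
        have hb1 : ‖(1 - lam x) • (r x - g y)‖ ≤ (dist x y / T) * 2 := by
          rw [norm_smul, Real.norm_eq_abs, abs_of_nonneg (by linarith [hlam1 x])]
          exact mul_le_mul h1x (hrg2 x y) (norm_nonneg _) (div_nonneg hd0 hTpos.le)
        have hb2 : ‖lam x • (g x - g y)‖ ≤ ε/4 * dist x y := by
          rw [norm_smul, Real.norm_eq_abs, abs_of_nonneg (hlam0 x)]
          calc lam x * ‖g x - g y‖ ≤ 1 * ‖g x - g y‖ :=
              mul_le_mul_of_nonneg_right (hlam1 x) (norm_nonneg _)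
            _ ≤ ε/4 * dist x y := by rw [one_mul]; exact hglxy
        calc ‖(1 - lam x) • (r x - g y) + lam x • (g x - g y)‖
            ≤ ‖(1 - lam x) • (r x - g y)‖ + ‖lam x • (g x - g y)‖ := norm_add_le _ _
          _ ≤ (dist x y / T) * 2 + ε/4 * dist x y := by linarith
          _ ≤ ε * dist x y + ε := by rw [hdT]; nlinarith
    · have hx1 : lam x = 1 := le_antisymm (hlam1 x) hx
      rcases lt_or_ge (lam y) 1 with hy | hy
      · have hid : hh x - hh y = (1 - lam y) • (g x - r y) + lam y • (g x - g y) := by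
          simp only [hhdef]; rw [hx1]; module
        rw [hid]
        have h1y : 1 - lam y ≤ dist x y / T := by
          have h5 := hlamlip x y; rw [abs_le, hx1] at h5; linarith [h5.2]
        have hb1 : ‖(1 - lam y) • (g x - r y)‖ ≤ (dist x y / T) * 2 := by
          rw [norm_smul, Real.norm_eq_abs, abs_of_nonneg (by linarith [hlam1 y])]
          have hgr2 : ‖g x - r y‖ ≤ 2 := by rw [norm_sub_rev]; exact hrg2 y x
          exact mul_le_mul h1y hgr2 (norm_nonneg _) (div_nonneg hd0 hTpos.le)
        have hb2 : ‖lam y • (g x - g y)‖ ≤ ε/4 * dist x y := by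
          rw [norm_smul, Real.norm_eq_abs, abs_of_nonneg (hlam0 y)]
          calc lam y * ‖g x - g y‖ ≤ 1 * ‖g x - g y‖ :=
              mul_le_mul_of_nonneg_right (hlam1 y) (norm_nonneg _)
            _ ≤ ε/4 * dist x y := by rw [one_mul]; exact hglxy
        calc ‖(1 - lam y) • (g x - r y) + lam y • (g x - g y)‖
            ≤ ‖(1 - lam y) • (g x - r y)‖ + ‖lam y • (g x - g y)‖ := norm_add_le _ _
          _ ≤ (dist x y / T) * 2 + ε/4 * dist x y := by linarith
          _ ≤ ε * dist x y + ε := by rw [hdT]; nlinarith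
      · have hy1 : lam y = 1 := le_antisymm (hlam1 y) hy
        have hid : hh x - hh y = g x - g y := by
          simp only [hhdef]; rw [hx1, hy1]; module
        rw [hid]
        calc ‖g x - g y‖ ≤ ε/4 * dist x y := hglxy
          _ ≤ ε * dist x y + ε := by nlinarith
  -- stars of hh are contained in stars of f
  have hstar : ∀ (w : S) (x : X), hh x ∈ _root_.star K w → f x ∈ _root_.star K w := by
    intro w x hx
    refine ⟨hfK x, ?_⟩
    have h2 := hx.2
    have hsupp := hhsuppf x (mem_support.mpr (ne_of_gt h2))
    rw [mem_support] at hsupp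
    exact lt_of_le_of_ne (hfnn x w) (Ne.symm hsupp)
  obtain ⟨M, hM⟩ := hf.2.2.1
  have hubdd : UniformlyBounded (fun w : S => hh ⁻¹' star K w) := by
    refine ⟨M, fun w x hx y hy => ?_⟩
    exact hM w x (hstar w x hx) y (hstar w y hy)
  -- Lebesgue number
  have hleb : ENNReal.ofReal (1/ε) ≤ lebesgue (fun w : S => hh ⁻¹' star K w) := by
    rw [lebesgue]
    refine le_iInf fun x => ?_
    obtain ⟨i, hi⟩ := hΨdeep x
    refine le_trans ?_ (le_iSup _ (v i))
    apply Metric.le_infEDist.2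
    intro z hz
    by_contra hlt
    push_neg at hlt
    have hdz : dist x z < 1/ε := edist_lt_ofReal.mp hlt
    have hΨz : 0 < Ψ i z := by
      have h5 := hΨlip i x z
      rw [abs_le] at h5
      linarith [h5.2]
    have hiz : i ∈ Jf z := (hJmem z i).2 hΨz
    have hgz : 0 < (g z : S → ℝ) (v i) := hgpos z i hiz
    have hrz : lam z < 1 → 0 < (r z : S → ℝ) (v i) := by
      intro hlz
      obtain ⟨hAz, hdza⟩ := haaspec z hlz
      have haz : aa z ∈ U i := hΨU i z hΨz (aa z) hdza
      have hfaz : 0 < (f (aa z) : S → ℝ) (v i) := by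
        have h6 := hv i haz; rw [Set.mem_preimage] at h6; exact h6.2
      have hfz : 0 < (f z : S → ℝ) (v i) := by
        have h6 := hv i (hxmem z i hiz); rw [Set.mem_preimage] at h6; exact h6.2
      rw [hrco z hlz]
      refine mul_pos (inv_pos.mpr (hρpos z hlz)) ?_
      rw [hQco, if_pos ((hσmem z (v i)).2 (ne_of_gt hfz))]
      exact hfaz
    have hhz : 0 < (hh z : S → ℝ) (v i) := by
      rw [hhco]
      rcases lt_or_ge (lam z) 1 with hlz | hlz
      · have h6 := hrz hlz
        have h7 := hgnn z (v i)
        have h8 := hlam0 z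
        nlinarith
      · have hz1 : lam z = 1 := le_antisymm (hlam1 z) hlz
        rw [hz1]
        simpa using hgz
    exact hz (show z ∈ hh ⁻¹' star K (v i) from ⟨hhK z, hhz⟩)
  exact ⟨hh, fun x => ⟨hhK x, hhsk x⟩, hhA, hhsuppf, hhK, hhlip, hubdd, hleb⟩

/-- Theorem A: if `asdim X ≤ n`, then for every `ε > 0` there is `δ > 0`
such that every `δ`-partition of unity `f : X → K` sending `A` into `K^(n)` admits a
filler `h : X → K^(n)` that is an `ε`-partition of unity. -/
theorem theoremA (X : Type u) [MetricSpace X] (n : ℕ) (hX : AsdimLE X n) :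
    ∀ ε : ℝ, 0 < ε → ∃ δ : ℝ, 0 < δ ∧
      ∀ (S : Type u) (K : Set (ellOne S)) (A : Set X) (f : X → ellOne S),
        IsSimplicialComplex K → IsDeltaPartitionOfUnity δ K f →
        (∀ a ∈ A, f a ∈ K ∩ skeleton S n) →
        ∃ h : X → ellOne S,
          (∀ x, h x ∈ K ∩ skeleton S n) ∧
          (∀ a ∈ A, h a = f a) ∧
          (∀ x, support ((h x : S → ℝ)) ⊆ support ((f x : S → ℝ))) ∧
          IsDeltaPartitionOfUnity ε K h := by
  intro ε hε
  classical
  by_cases hXe : Nonempty X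
  case neg =>
    have hE : IsEmpty X := not_nonempty_iff.mp hXe
    refine ⟨1, one_pos, ?_⟩
    intro S K A f hK hf hfA
    refine ⟨f, fun x => (hE.elim x), fun a _ => rfl, fun x => (hE.elim x),
      fun x => (hE.elim x), fun x => (hE.elim x), ⟨0, fun v x hx => (hE.elim x)⟩, ?_⟩
    rw [lebesgue, iInf_of_empty]
    exact le_top
  case pos =>
    haveI := hXe
    obtain ⟨T, hTdef⟩ : ∃ z : ℝ, z = 8/ε := ⟨_, rfl⟩
    have hTpos : 0 < T := by rw [hTdef]; positivity
    obtain ⟨R, hRdef⟩ : ∃ z : ℝ, z = 2*(T+2) + 32*(n+1)/ε + 2/ε + 8 := ⟨_, rfl⟩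
    have hRpos : 0 < R := by rw [hRdef, hTdef]; positivity
    obtain ⟨ι, U, hcov, ⟨B₀, hB₀⟩, hmultU, hlebU⟩ := hX R hRpos
    obtain ⟨B, hBdef⟩ : ∃ z : ℝ, z = max B₀ 0 := ⟨_, rfl⟩
    have hB : 0 ≤ B := by rw [hBdef]; exact le_max_right _ _
    have hUB : ∀ i, ∀ x ∈ U i, ∀ y ∈ U i, dist x y ≤ B := fun i x hx y hy =>
      by rw [hBdef]; exact le_trans (hB₀ i x hx y hy) (le_max_left _ _)
    obtain ⟨δ, hδdef⟩ : ∃ z : ℝ, z = min (min (ε/(16*T+36)) (1/(2*(T+3)))) (1/(B+2)) := ⟨_, rfl⟩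
    have hδpos : 0 < δ := by
      rw [hδdef]
      refine lt_min (lt_min ?_ ?_) ?_
      · apply div_pos hε; linarith
      · apply div_pos one_pos; linarith
      · apply div_pos one_pos; linarith
    have hδa : δ ≤ ε/(16*T+36) := by
      rw [hδdef]; exact le_trans (min_le_left _ _) (min_le_left _ _)
    have hδb : δ ≤ 1/(2*(T+3)) := by
      rw [hδdef]; exact le_trans (min_le_left _ _) (min_le_right _ _)
    have hδc : δ ≤ 1/(B+2) := by rw [hδdef]; exact min_le_right _ _
    refine ⟨δ, hδpos, ?_⟩
    intro S K A f hK hf hfA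
    rw [lebesgue] at hlebU
    by_cases huniv : ∃ i, U i = Set.univ
    · obtain ⟨i₀, hi₀⟩ := huniv
      refine coreA n ε T R δ B hε hTdef hRdef hδpos hδa hδb hδc hB
        (ι := PUnit) (fun _ => Set.univ) ?_ ?_ ?_ S K A f hK hf hfA
      · intro i x hx y hy
        refine hUB i₀ x ?_ y ?_ <;> rw [hi₀] <;> trivial
      · intro x
        refine le_trans (Set.encard_le_one_iff.mpr fun a b _ _ => Subsingleton.elim a b) ?_
        exact le_add_self
      · intro x
        refine ⟨PUnit.unit, ?_⟩
        rw [Set.compl_univ, show EMetric.infEdist x ∅ = ⊤ from EMetric.infEdist_empty, min_eq_right le_top,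
          ENNReal.toReal_ofReal hRpos.le]
        linarith
    · push_neg at huniv
      refine coreA n ε T R δ B hε hTdef hRdef hδpos hδa hδb hδc hB
        U hUB ?_ ?_ S K A f hK hf hfA
      · intro x
        have hsub : {i | 0 < (min (EMetric.infEdist x (U i)ᶜ) (ENNReal.ofReal R)).toReal}
            ⊆ {i | 0 < Metric.infDist x (U i)ᶜ} := by
          intro i hi
          simp only [Set.mem_setOf_eq] at hi ⊢
          obtain ⟨z, hz⟩ := Set.nonempty_compl.mpr (huniv i)
          have hne : EMetric.infEdist x (U i)ᶜ ≠ ⊤ :=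
            ne_top_of_le_ne_top (edist_ne_top x z) (EMetric.infEdist_le_edist_of_mem hz)
          have h0 : EMetric.infEdist x (U i)ᶜ ≠ 0 := by
            intro h0
            rw [h0] at hi
            simp at hi
          have := ENNReal.toReal_pos h0 hne
          simpa [Metric.infDist, EMetric.infEdist] using this
        refine le_trans (Set.encard_mono hsub) ?_
        have h9 := hmultU x
        exact_mod_cast h9
      · intro x
        have h1 : ENNReal.ofReal R ≤ ⨆ i, EMetric.infEdist x (U i)ᶜ :=
          le_trans hlebU (iInf_le _ x)
        have h2 : ENNReal.ofReal (R/2) < ⨆ i, EMetric.infEdist x (U i)ᶜ :=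
          lt_of_lt_of_le ((ENNReal.ofReal_lt_ofReal_iff hRpos).mpr (by linarith)) h1
        obtain ⟨i, hi⟩ := lt_iSup_iff.mp h2
        refine ⟨i, ?_⟩
        have h3 : ENNReal.ofReal (R/2) ≤ min (EMetric.infEdist x (U i)ᶜ) (ENNReal.ofReal R) :=
          le_min hi.le (ENNReal.ofReal_le_ofReal (by linarith))
        have h4 := ENNReal.toReal_mono
          (ne_top_of_le_ne_top ofReal_ne_top (min_le_right _ _)) h3
        rwa [ENNReal.toReal_ofReal (by linarith)] at h4

end
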